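/- For closed subsets C and C' of the rotation poset with C ⊆ C', the stable matching generated by C dominates the stable matching generated by C'. -/

import Mathlib

/-- `rB b g` is the rank boy `b` gives girl `g` (smaller = more preferred), and
`rG g b` the rank girl `g` gives boy `b`.  A matching (bijection) `M` is stable if
no pair `(b, g)` prefer each other to their partners. -/
def StableM {B G : Type*} (rB : B → G → ℕ) (rG : G → B → ℕ) (M : B ≃ G) : Prop :=
  ∀ (b : B) (g : G), ¬ (rB b g < rB b (M b) ∧ rG g b < rG g (M.symm g))

/-- The total weight of a matching. -/
def matchWeight {B G : Type*} [Fintype B] (w : B → G → ℚ) (M : B ≃ G) : ℚ :=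
  ∑ b, w b (M b)

/-- A maximum weight stable matching. -/
def MaxWtStable {B G : Type*} [Fintype B] (rB : B → G → ℕ) (rG : G → B → ℕ)
    (w : B → G → ℚ) (M : B ≃ G) : Prop :=
  StableM rB rG M ∧ ∀ N : B ≃ G, StableM rB rG N → matchWeight w N ≤ matchWeight w M

/-- A rotation: a cyclic sequence of `r ≥ 2` distinct pairs `(b_i, g_i)`.
Indices live in `ZMod r` so that `i + 1` wraps around. -/
structure Rotation (B G : Type*) where
  r : ℕ
  two_le : 2 ≤ r
  bs : ZMod r → B
  gs : ZMod r → G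
  inj_bs : Function.Injective bs
  inj_gs : Function.Injective gs

/-- `ρ` is exposed in `M`: each `b_i` is matched to `g_i`, and `g_{i+1} = s_M(b_i)` is
the first girl on `b_i`'s list preferring `b_i` to her `M`-partner. -/
def Exposed {B G : Type*} (rB : B → G → ℕ) (rG : G → B → ℕ) (M : B ≃ G)
    (ρ : Rotation B G) : Prop :=
  (∀ i, M (ρ.bs i) = ρ.gs i) ∧
    (∀ i, rG (ρ.gs (i + 1)) (ρ.bs i) < rG (ρ.gs (i + 1)) (M.symm (ρ.gs (i + 1)))) ∧
    (∀ i, ∀ g : G, rB (ρ.bs i) g < rB (ρ.bs i) (ρ.gs (i + 1)) →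
      ¬ (rG g (ρ.bs i) < rG g (M.symm g)))

/-- `M'` results from `M` by eliminating the rotation `ρ` (exposed in `M`):
each `b_i` moves from `g_i` to `g_{i+1}`, everyone else keeps their partner. -/
def Eliminates {B G : Type*} (rB : B → G → ℕ) (rG : G → B → ℕ)
    (M : B ≃ G) (ρ : Rotation B G) (M' : B ≃ G) : Prop :=
  Exposed rB rG M ρ ∧ (∀ i, M' (ρ.bs i) = ρ.gs (i + 1)) ∧
    ∀ b : B, (∀ i, b ≠ ρ.bs i) → M' b = M b

/-- `ElimChain rB rG M L M'`: the list `L` of rotations can be eliminated one after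
another starting from `M` and ending at `M'`. -/
def ElimChain {B G : Type*} (rB : B → G → ℕ) (rG : G → B → ℕ) :
    (B ≃ G) → List (Rotation B G) → (B ≃ G) → Prop
  | M, [], M' => M = M'
  | M, ρ :: L, M' => ∃ N : B ≃ G, Eliminates rB rG M ρ N ∧ ElimChain rB rG N L M'

/-- The boy-optimal stable matching. -/
def BoyOptimal {B G : Type*} (rB : B → G → ℕ) (rG : G → B → ℕ) (M₀ : B ≃ G) : Prop :=
  StableM rB rG M₀ ∧ ∀ M : B ≃ G, StableM rB rG M → ∀ b, rB b (M₀ b) ≤ rB b (M b)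

/-- The girl-optimal stable matching. -/
def GirlOptimal {B G : Type*} (rB : B → G → ℕ) (rG : G → B → ℕ) (Mz : B ≃ G) : Prop :=
  StableM rB rG Mz ∧ ∀ M : B ≃ G, StableM rB rG M → ∀ g, rG g (Mz.symm g) ≤ rG g (M.symm g)

/-- `ρ` is a rotation of the instance: it is exposed in some stable matching. -/
def IsRotation {B G : Type*} (rB : B → G → ℕ) (rG : G → B → ℕ) (ρ : Rotation B G) : Prop :=
  ∃ M : B ≃ G, StableM rB rG M ∧ Exposed rB rG M ρ

/-- The set of pairs of a rotation (rotations are identified up to cyclic shift by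
having equal pair sets). -/
def rotPairs {B G : Type*} (ρ : Rotation B G) : Set (B × G) :=
  {p | ∃ i, p = (ρ.bs i, ρ.gs i)}

/-- `ρ` moves `b` to `g`: after eliminating `ρ`, `b` is matched to `g`. -/
def MovesTo {B G : Type*} (ρ : Rotation B G) (b : B) (g : G) : Prop :=
  ∃ i, ρ.bs i = b ∧ ρ.gs (i + 1) = g

/-- `ρ` moves `b` from `g`: before eliminating `ρ`, `b` is matched to `g`. -/
def MovesFrom {B G : Type*} (ρ : Rotation B G) (b : B) (g : G) : Prop :=
  ∃ i, ρ.bs i = b ∧ ρ.gs i = g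

/-- `ρ'` precedes `ρ` in the rotation poset: `ρ'` is eliminated (up to cyclic shift)
in every sequence of eliminations from the boy-optimal matching `M₀` to a stable
matching in which `ρ` is exposed. -/
def Precedes {B G : Type*} (rB : B → G → ℕ) (rG : G → B → ℕ)
    (ρ' ρ : Rotation B G) : Prop :=
  ∀ (M₀ : B ≃ G) (L : List (Rotation B G)) (M : B ≃ G),
    BoyOptimal rB rG M₀ → ElimChain rB rG M₀ L M → Exposed rB rG M ρ →
      ∃ ρ'' ∈ L, rotPairs ρ'' = rotPairs ρ'

section AuxDomination

variable {B G : Type*} {rB : B → G → ℕ} {rG : G → B → ℕ}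

/-- The successor girl of a boy in an exposed rotation is uniquely determined by the
matching: it is the best girl preferring him to her partner. -/
lemma succ_unique (hrB : ∀ b, Function.Injective (rB b)) {M : B ≃ G} {ρ σ : Rotation B G}
    (hρ : Exposed rB rG M ρ) (hσ : Exposed rB rG M σ)
    {i : ZMod ρ.r} {j : ZMod σ.r} (hb : ρ.bs i = σ.bs j) :
    ρ.gs (i + 1) = σ.gs (j + 1) := by
  rcases lt_trichotomy (rB (ρ.bs i) (ρ.gs (i + 1))) (rB (ρ.bs i) (σ.gs (j + 1))) with h | h | h
  · have h3 := hσ.2.2 j (ρ.gs (i + 1)) (by rw [← hb]; exact h)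
    rw [← hb] at h3
    exact absurd (hρ.2.1 i) h3
  · exact hrB _ h
  · have h3 := hρ.2.2 i (σ.gs (j + 1)) h
    rw [hb] at h3
    exact absurd (hσ.2.1 j) h3

lemma elim_apply_bs {M N : B ≃ G} {ρ : Rotation B G} (h : Eliminates rB rG M ρ N)
    (i : ZMod ρ.r) : N (ρ.bs i) = ρ.gs (i + 1) := h.2.1 i

lemma elim_apply_other {M N : B ≃ G} {ρ : Rotation B G} (h : Eliminates rB rG M ρ N)
    {b : B} (hb : ∀ i, b ≠ ρ.bs i) : N b = M b := h.2.2 b hb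

lemma elim_symm_gs {M N : B ≃ G} {ρ : Rotation B G} (h : Eliminates rB rG M ρ N)
    (j : ZMod ρ.r) : N.symm (ρ.gs (j + 1)) = ρ.bs j := by
  rw [Equiv.symm_apply_eq]; exact (h.2.1 j).symm

lemma elim_symm_other {M N : B ≃ G} {ρ : Rotation B G} (h : Eliminates rB rG M ρ N)
    {g : G} (hg : ∀ j, g ≠ ρ.gs j) : N.symm g = M.symm g := by
  rw [Equiv.symm_apply_eq]
  have hb : ∀ i, M.symm g ≠ ρ.bs i := by
    intro i hi
    exact hg i (by rw [← h.1.1 i, ← hi, Equiv.apply_symm_apply])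
  rw [h.2.2 _ hb, Equiv.apply_symm_apply]

/-- Eliminating a rotation weakly improves every girl's partner. -/
lemma elim_girl_improve {M N : B ≃ G} {ρ : Rotation B G} (h : Eliminates rB rG M ρ N)
    (g : G) : rG g (N.symm g) ≤ rG g (M.symm g) := by
  by_cases hg : ∃ j, g = ρ.gs j
  · obtain ⟨j, rfl⟩ := hg
    have hj : ρ.gs j = ρ.gs ((j - 1) + 1) := by rw [sub_add_cancel]
    rw [hj, elim_symm_gs h (j - 1)]
    have := h.1.2.1 (j - 1)
    rw [← hj] at this ⊢
    exact le_of_lt this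
  · push_neg at hg
    rw [elim_symm_other h hg]

/-- Eliminating a rotation exposed in a stable matching weakly worsens every boy. -/
lemma elim_boy_worsen {M N : B ≃ G} {ρ : Rotation B G} (hM : StableM rB rG M)
    (h : Eliminates rB rG M ρ N) (b : B) : rB b (M b) ≤ rB b (N b) := by
  by_cases hb : ∃ i, b = ρ.bs i
  · obtain ⟨i, rfl⟩ := hb
    rw [elim_apply_bs h i]
    have hst := hM (ρ.bs i) (ρ.gs (i + 1))
    have h2 := h.1.2.1 i
    by_contra hlt
    exact hst ⟨lt_of_not_ge hlt, h2⟩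
  · push_neg at hb
    rw [elim_apply_other h hb]

/-- Eliminating an exposed rotation preserves stability. -/
lemma elim_stable {M N : B ≃ G} {ρ : Rotation B G} (hM : StableM rB rG M)
    (h : Eliminates rB rG M ρ N) : StableM rB rG N := by
  rintro b g ⟨h1, h2⟩
  have hg' : rG g b < rG g (M.symm g) := lt_of_lt_of_le h2 (elim_girl_improve h g)
  by_cases hb : ∃ i, b = ρ.bs i
  · obtain ⟨i, rfl⟩ := hb
    rw [elim_apply_bs h i] at h1
    exact h.1.2.2 i g h1 hg'
  · push_neg at hb
    rw [elim_apply_other h hb] at h1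
    exact hM b g ⟨h1, hg'⟩

/-- Along an elimination chain from a stable matching, stability is preserved and
every boy weakly worsens. -/
lemma chain_stable_worsen :
    ∀ (L : List (Rotation B G)) (M1 M : B ≃ G), StableM rB rG M1 →
      ElimChain rB rG M1 L M → StableM rB rG M ∧ ∀ b, rB b (M1 b) ≤ rB b (M b)
  | [], M1, M, hst, hch => by cases hch; exact ⟨hst, fun b => le_refl _⟩
  | ρ :: L, M1, M, hst, hch => by
      obtain ⟨N, hel, hch2⟩ := hch
      obtain ⟨hstM, hle⟩ :=
        chain_stable_worsen L N M (elim_stable hst hel) hch2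
      exact ⟨hstM, fun b => le_trans (elim_boy_worsen hst hel b) (hle b)⟩

/-- Two rotations exposed in the same matching that share a boy have equal pair sets. -/
lemma rotPairs_subset_of_shared (hrB : ∀ b, Function.Injective (rB b)) {M : B ≃ G}
    {ρ σ : Rotation B G} (hρ : Exposed rB rG M ρ) (hσ : Exposed rB rG M σ)
    {i : ZMod ρ.r} {j : ZMod σ.r} (hb : ρ.bs i = σ.bs j) :
    rotPairs ρ ⊆ rotPairs σ := by
  haveI : NeZero ρ.r := ⟨by have := ρ.two_le; omega⟩
  have key : ∀ n : ℕ, ρ.bs (i + (n : ZMod ρ.r)) = σ.bs (j + (n : ZMod σ.r)) := by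
    intro n
    induction n with
    | zero => simpa using hb
    | succ n ih =>
        have hg : ρ.gs ((i + (n : ZMod ρ.r)) + 1) = σ.gs ((j + (n : ZMod σ.r)) + 1) :=
          succ_unique hrB hρ hσ ih
        have h1 : M (ρ.bs ((i + (n : ZMod ρ.r)) + 1)) = M (σ.bs ((j + (n : ZMod σ.r)) + 1)) := by
          rw [hρ.1, hσ.1, hg]
        have h2 := M.injective h1
        have e1 : i + ((n + 1 : ℕ) : ZMod ρ.r) = (i + (n : ZMod ρ.r)) + 1 := by
          push_cast; ring
        have e2 : j + ((n + 1 : ℕ) : ZMod σ.r) = (j + (n : ZMod σ.r)) + 1 := by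
          push_cast; ring
        rw [e1, e2]; exact h2
  rintro p ⟨t, rfl⟩
  obtain ⟨n, hn⟩ : ∃ n : ℕ, t = i + (n : ZMod ρ.r) :=
    ⟨(t - i).val, by rw [ZMod.natCast_val, ZMod.cast_id]; ring⟩
  have hbs : ρ.bs t = σ.bs (j + (n : ZMod σ.r)) := by rw [hn]; exact key n
  have hgs : ρ.gs t = σ.gs (j + (n : ZMod σ.r)) := by
    have := congrArg M hbs
    rwa [hρ.1, hσ.1] at this
  exact ⟨j + (n : ZMod σ.r), by rw [hbs, hgs]⟩

lemma rotPairs_eq_of_shared (hrB : ∀ b, Function.Injective (rB b)) {M : B ≃ G}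
    {ρ σ : Rotation B G} (hρ : Exposed rB rG M ρ) (hσ : Exposed rB rG M σ)
    {i : ZMod ρ.r} {j : ZMod σ.r} (hb : ρ.bs i = σ.bs j) :
    rotPairs ρ = rotPairs σ :=
  Set.Subset.antisymm (rotPairs_subset_of_shared hrB hρ hσ hb)
    (rotPairs_subset_of_shared hrB hσ hρ hb.symm)

/-- Two rotations exposed in the same matching with different pair sets are boy-disjoint. -/
lemma exposed_disjoint (hrB : ∀ b, Function.Injective (rB b)) {M : B ≃ G}
    {ρ σ : Rotation B G} (hρ : Exposed rB rG M ρ) (hσ : Exposed rB rG M σ)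
    (hne : rotPairs ρ ≠ rotPairs σ) : ∀ (i : ZMod ρ.r) (j : ZMod σ.r), ρ.bs i ≠ σ.bs j :=
  fun _ _ hb => hne (rotPairs_eq_of_shared hrB hρ hσ hb)

/-- Exposedness persists after elimination of a boy-disjoint rotation. -/
lemma exposed_persists (hrB : ∀ b, Function.Injective (rB b)) {M N : B ≃ G}
    {ρ σ : Rotation B G} (hρ : Exposed rB rG M ρ) (hσel : Eliminates rB rG M σ N)
    (hdisj : ∀ (i : ZMod ρ.r) (j : ZMod σ.r), ρ.bs i ≠ σ.bs j) :
    Exposed rB rG N ρ := by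
  have hgdisj : ∀ (i : ZMod ρ.r) (j : ZMod σ.r), ρ.gs i ≠ σ.gs j := by
    intro i j hg
    have : M (ρ.bs i) = M (σ.bs j) := by rw [hρ.1, hσel.1.1, hg]
    exact hdisj i j (M.injective this)
  refine ⟨?_, ?_, ?_⟩
  · intro i
    rw [elim_apply_other hσel (fun j => hdisj i j), hρ.1]
  · intro i
    rw [elim_symm_other hσel (fun j => hgdisj (i + 1) j)]
    exact hρ.2.1 i
  · intro i g hlt
    have h3 := hρ.2.2 i g hlt
    rw [not_lt] at h3 ⊢
    exact le_trans (elim_girl_improve hσel g) h3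

/-- The elimination of an exposed rotation exists. -/
lemma elim_exists [Finite G] {M : B ≃ G} {ρ : Rotation B G} (hρ : Exposed rB rG M ρ) :
    ∃ N, Eliminates rB rG M ρ N := by
  classical
  set f : G → G := fun g => if h : ∃ i, ρ.gs i = g then ρ.gs (h.choose + 1) else g with hf
  have hfin : ∀ (i : ZMod ρ.r), f (ρ.gs i) = ρ.gs (i + 1) := by
    intro i
    have h : ∃ j, ρ.gs j = ρ.gs i := ⟨i, rfl⟩
    have hc : h.choose = i := ρ.inj_gs h.choose_spec
    simp only [hf, dif_pos h, hc]
  have hfout : ∀ g, (∀ i, g ≠ ρ.gs i) → f g = g := by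
    intro g hg
    have h : ¬∃ j, ρ.gs j = g := by rintro ⟨j, hj⟩; exact hg j hj.symm
    simp only [hf, dif_neg h]
  have hinj : Function.Injective f := by
    intro a b hab
    by_cases ha : ∃ i, ρ.gs i = a <;> by_cases hb : ∃ i, ρ.gs i = b
    · obtain ⟨i, rfl⟩ := ha; obtain ⟨j, rfl⟩ := hb
      rw [hfin, hfin] at hab
      have := ρ.inj_gs hab
      exact congrArg ρ.gs (add_right_cancel this)
    · obtain ⟨i, rfl⟩ := ha
      rw [hfin, hfout b (fun j hj => hb ⟨j, hj.symm⟩)] at hab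
      exact absurd ⟨i + 1, hab⟩ hb
    · obtain ⟨j, rfl⟩ := hb
      rw [hfin, hfout a (fun i hi => ha ⟨i, hi.symm⟩)] at hab
      exact absurd ⟨j + 1, hab.symm⟩ ha
    · rwa [hfout a (fun i hi => ha ⟨i, hi.symm⟩), hfout b (fun j hj => hb ⟨j, hj.symm⟩)] at hab
  let e : G ≃ G := Equiv.ofBijective f (Finite.injective_iff_bijective.mp hinj)
  refine ⟨M.trans e, hρ, ?_, ?_⟩
  · intro i
    show e (M (ρ.bs i)) = _
    rw [hρ.1]
    exact hfin i
  · intro b hb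
    show e (M b) = M b
    apply hfout
    intro i hi
    exact hb i (M.injective (by rw [hρ.1, hi]))

/-- Uniqueness: eliminating rotations with equal pair sets from the same matching
produces the same matching. -/
lemma elim_unique (hrB : ∀ b, Function.Injective (rB b)) {M N N' : B ≃ G}
    {ρ ρ' : Rotation B G} (h1 : Eliminates rB rG M ρ N) (h2 : Eliminates rB rG M ρ' N')
    (hp : rotPairs ρ = rotPairs ρ') : N = N' := by
  apply Equiv.ext
  intro b
  by_cases hb : ∃ i, b = ρ.bs i
  · obtain ⟨i, rfl⟩ := hb
    have hmem : (ρ.bs i, ρ.gs i) ∈ rotPairs ρ' := by rw [← hp]; exact ⟨i, rfl⟩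
    obtain ⟨j, hj⟩ := hmem
    have hbj : ρ.bs i = ρ'.bs j := congrArg Prod.fst hj
    rw [h1.2.1 i, hbj, h2.2.1 j]
    exact succ_unique hrB h1.1 h2.1 hbj
  · push_neg at hb
    have hb' : ∀ j, b ≠ ρ'.bs j := by
      intro j hj
      have : (ρ'.bs j, ρ'.gs j) ∈ rotPairs ρ := by rw [hp]; exact ⟨j, rfl⟩
      obtain ⟨i, hi⟩ := this
      exact hb i (hj.trans (congrArg Prod.fst hi))
    rw [h1.2.2 b hb, h2.2.2 b hb']

/-- A rotation exposed at the start of a chain whose pair set occurs in the chain can be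
pulled to the front. -/
lemma transfer [Finite G] (hrB : ∀ b, Function.Injective (rB b))
    {ρ ρ'' : Rotation B G} {Bf : List (Rotation B G)} {M' : B ≃ G}
    (hp : rotPairs ρ'' = rotPairs ρ) :
    ∀ (A : List (Rotation B G)) (M1 N : B ≃ G),
      Eliminates rB rG M1 ρ N →
      ElimChain rB rG M1 (A ++ ρ'' :: Bf) M' →
      (∀ σ ∈ A, rotPairs σ ≠ rotPairs ρ) →
      ElimChain rB rG N (A ++ Bf) M'
  | [], M1, N, hel, hch, _ => by
      obtain ⟨N'', h1, h2⟩ := hch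
      rwa [elim_unique hrB hel h1 hp.symm]
  | σ :: A2, M1, N, hel, hch, hA => by
      obtain ⟨Ms, hσel, hch2⟩ := hch
      have hne : rotPairs ρ ≠ rotPairs σ := fun h => hA σ List.mem_cons_self h.symm
      have hdisj : ∀ (i : ZMod ρ.r) (j : ZMod σ.r), ρ.bs i ≠ σ.bs j :=
        exposed_disjoint hrB hel.1 hσel.1 hne
      have hρMs : Exposed rB rG Ms ρ := exposed_persists hrB hel.1 hσel hdisj
      obtain ⟨Ns, hNs⟩ := elim_exists hρMs
      have hch3 : ElimChain rB rG Ns (A2 ++ Bf) M' :=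
        transfer hrB hp A2 Ms Ns hNs hch2 (fun σ' h => hA σ' (List.mem_cons_of_mem _ h))
      refine ⟨Ns, ⟨?_, ?_, ?_⟩, hch3⟩
      · exact exposed_persists hrB hσel.1 hel (fun j i h => hdisj i j h.symm)
      · intro j
        rw [elim_apply_other hNs (fun i => (hdisj i j).symm)]
        exact hσel.2.1 j
      · intro b hbσ
        by_cases hbρ : ∃ i, b = ρ.bs i
        · obtain ⟨i, rfl⟩ := hbρ
          rw [hNs.2.1 i, hel.2.1 i]
        · push_neg at hbρ
          rw [elim_apply_other hNs hbρ, hσel.2.2 b hbσ, hel.2.2 b hbρ]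

/-- Any rotation in a chain is exposed at some weakly-worse intermediate matching. -/
lemma chain_mem {τ : Rotation B G} :
    ∀ (L : List (Rotation B G)) (N M : B ≃ G), StableM rB rG N →
      ElimChain rB rG N L M → τ ∈ L →
      ∃ P, (∀ b, rB b (N b) ≤ rB b (P b)) ∧ Exposed rB rG P τ
  | [], _, _, _, _, hτ => absurd hτ List.not_mem_nil
  | σ :: L, N, M, hst, hch, hτ => by
      obtain ⟨N1, hel, hch2⟩ := hch
      rcases List.mem_cons.mp hτ with rfl | hτ'
      · exact ⟨N, fun b => le_refl _, hel.1⟩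
      · obtain ⟨P, hle, hexp⟩ := chain_mem L N1 M (elim_stable hst hel) hch2 hτ'
        exact ⟨P, fun b => le_trans (elim_boy_worsen hst hel b) (hle b), hexp⟩

/-- A rotation cannot be eliminated twice (up to pair sets) in one chain. -/
lemma no_repeat (hrB : ∀ b, Function.Injective (rB b)) {M1 N M : B ≃ G}
    {ρ τ : Rotation B G} {L2 : List (Rotation B G)}
    (hM1 : StableM rB rG M1) (hel : Eliminates rB rG M1 ρ N)
    (hch : ElimChain rB rG N L2 M) (hτ : τ ∈ L2) : rotPairs τ ≠ rotPairs ρ := by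
  intro hp
  obtain ⟨P, hle, hτP⟩ := chain_mem L2 N M (elim_stable hM1 hel) hch hτ
  have hb0 : ((ρ.bs 0, ρ.gs 0) : B × G) ∈ rotPairs τ := by rw [hp]; exact ⟨0, rfl⟩
  obtain ⟨j, hj⟩ := hb0
  have hbj : ρ.bs 0 = τ.bs j := congrArg Prod.fst hj
  have hgj : ρ.gs 0 = τ.gs j := congrArg Prod.snd hj
  have hPb : P (ρ.bs 0) = ρ.gs 0 := by rw [hbj, hτP.1 j, ← hgj]
  have hNb : N (ρ.bs 0) = ρ.gs (0 + 1) := hel.2.1 0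
  have h1 : rB (ρ.bs 0) (ρ.gs (0 + 1)) ≤ rB (ρ.bs 0) (ρ.gs 0) := by
    have := hle (ρ.bs 0)
    rwa [hNb, hPb] at this
  have h2 : rB (ρ.bs 0) (ρ.gs 0) ≤ rB (ρ.bs 0) (ρ.gs (0 + 1)) := by
    have := elim_boy_worsen hM1 hel (ρ.bs 0)
    rwa [hel.1.1 0, hNb] at this
  have heq : ρ.gs 0 = ρ.gs (0 + 1) := hrB _ (le_antisymm h2 h1)
  have h01 : (0 : ZMod ρ.r) = 0 + 1 := ρ.inj_gs heq
  haveI : Fact (1 < ρ.r) := ⟨by have := ρ.two_le; omega⟩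
  rw [zero_add] at h01
  exact one_ne_zero h01.symm

/-- A first-occurrence splitting of a list. -/
lemma list_first {α : Type*} (p : α → Prop) :
    ∀ (l : List α), (∃ x ∈ l, p x) →
      ∃ A x Bf, l = A ++ x :: Bf ∧ p x ∧ ∀ y ∈ A, ¬ p y
  | [], h => by simp at h
  | a :: l, h => by
      classical
      by_cases ha : p a
      · exact ⟨[], a, l, rfl, ha, by simp⟩
      · have hl : ∃ x ∈ l, p x := by
          obtain ⟨x, hx, hpx⟩ := h
          rcases List.mem_cons.mp hx with rfl | hx'
          · exact absurd hpx ha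
          · exact ⟨x, hx', hpx⟩
        obtain ⟨A, x, Bf, rfl, hpx, hA⟩ := list_first p l hl
        refine ⟨a :: A, x, Bf, rfl, hpx, ?_⟩
        intro y hy
        rcases List.mem_cons.mp hy with rfl | hy'
        · exact ha
        · exact hA y hy'

/-- Main lemma: domination for chains from a common stable matching. -/
lemma main_domination [Finite G] (hrB : ∀ b, Function.Injective (rB b)) :
    ∀ (L : List (Rotation B G)) (M1 : B ≃ G) (L' : List (Rotation B G)) (M M' : B ≃ G),
      StableM rB rG M1 → ElimChain rB rG M1 L M → ElimChain rB rG M1 L' M' →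
      (∀ ρ ∈ L, ∃ ρ' ∈ L', rotPairs ρ' = rotPairs ρ) →
      ∀ b, rB b (M b) ≤ rB b (M' b)
  | [], M1, L', M, M', hst, hch, hch', _ => by
      cases hch
      exact (chain_stable_worsen L' M1 M' hst hch').2
  | ρ :: L2, M1, L', M, M', hst, hch, hch', hsub => by
      obtain ⟨N, hel, hch2⟩ := hch
      obtain ⟨ρ'', hρ''mem, hρ''p⟩ := hsub ρ List.mem_cons_self
      obtain ⟨A, x, Bf, rfl, hpx, hA⟩ :=
        list_first (fun σ => rotPairs σ = rotPairs ρ) L' ⟨ρ'', hρ''mem, hρ''p⟩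
      have hch'' : ElimChain rB rG N (A ++ Bf) M' :=
        transfer hrB hpx A M1 N hel hch' hA
      have hNst : StableM rB rG N := elim_stable hst hel
      refine main_domination hrB L2 N (A ++ Bf) M M' hNst hch2 hch'' ?_
      intro τ hτ
      obtain ⟨σ, hσm, hσp⟩ := hsub τ (List.mem_cons_of_mem _ hτ)
      rcases List.mem_append.mp hσm with h | h
      · exact ⟨σ, List.mem_append_left _ h, hσp⟩
      · rcases List.mem_cons.mp h with rfl | h'
        · exact absurd (hσp.symm.trans hpx) (no_repeat hrB hst hel hch2 hτ)
        · exact ⟨σ, List.mem_append_right _ h', hσp⟩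

end AuxDomination

/-- For closed subsets `C ⊆ C'` of the rotation poset, the stable matching generated by
`C` dominates the one generated by `C'`: if `M` and `M'` are obtained from the
boy-optimal matching `M₀` by eliminating lists of rotations `L` and `L'` with every
rotation of `L` occurring (up to cyclic shift) in `L'`, then every boy weakly prefers
his `M`-partner to his `M'`-partner. -/
theorem closed_subset_domination {B G : Type*} [Fintype B] [Fintype G]
    [DecidableEq B] [DecidableEq G]
    (rB : B → G → ℕ) (rG : G → B → ℕ)
    (hrB : ∀ b, Function.Injective (rB b)) (hrG : ∀ g, Function.Injective (rG g))
    (M₀ : B ≃ G) (hM₀ : BoyOptimal rB rG M₀)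
    (L L' : List (Rotation B G)) (M M' : B ≃ G)
    (hL : ElimChain rB rG M₀ L M) (hL' : ElimChain rB rG M₀ L' M')
    (hsub : ∀ ρ ∈ L, ∃ ρ' ∈ L', rotPairs ρ' = rotPairs ρ) :
    ∀ b, rB b (M b) ≤ rB b (M' b) :=
  main_domination hrB L M₀ L' M M' hM₀.1 hL hL' hsub
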